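/- For every integer k ≥ 0 and every s ∈ ℂ with Re(s) > 0, one has ∫_{−1}^{1} ((1 − t)/2)^{s−1} P_k(t) dt = (−1)^k · 2 · (∏_{j=1}^{k} (s − j)) / (∏_{j=0}^{k} (s + j)), where P_k is the k-th Legendre polynomial. (For k = 0 the empty product in the numerator equals 1 and the identity reads ∫_{−1}^{1} ((1−t)/2)^{s−1} dt = 2/s.) -/

import Mathlib

open Complex

/-- The `k`-th Legendre polynomial (as a function on `ℝ`), via Rodrigues' formula. -/
noncomputable def legendreP (k : ℕ) (t : ℝ) : ℝ :=
  (1 / (2 ^ k * (Nat.factorial k) : ℝ)) *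
    iteratedDeriv k (fun x : ℝ => (x ^ 2 - 1) ^ k) t

open Polynomial Finset

theorem iteratedDeriv_polyEval (n : ℕ) (p : ℝ[X]) :
    iteratedDeriv n (fun x => p.eval x) = fun x => (derivative^[n] p).eval x := by
  induction n generalizing p with
  | zero => simp
  | succ n ih =>
    rw [iteratedDeriv_succ', Function.iterate_succ_apply]
    rw [show (deriv fun x => p.eval x) = fun x => (derivative p).eval x from
      funext fun x => p.deriv]
    exact ih _

theorem coeff_nat (k j : ℕ) (hj : j ≤ k) :
    k.choose j * (k.descFactorial (k - j) * k.descFactorial j) =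
      k.choose j ^ 2 * k.factorial := by
  rw [Nat.descFactorial_eq_factorial_mul_choose, Nat.descFactorial_eq_factorial_mul_choose,
    Nat.choose_symm hj, ← Nat.choose_mul_factorial_mul_factorial hj]
  ring

theorem legendre_eval (k : ℕ) (t : ℝ) :
    legendreP k t = ∑ j ∈ range (k + 1),
      ((k.choose j : ℝ)) ^ 2 * ((t - 1) / 2) ^ j * ((t + 1) / 2) ^ (k - j) := by
  have hfun : (fun x : ℝ => (x ^ 2 - 1) ^ k)
      = fun x : ℝ => (((X - C 1) ^ k * (X - C (-1)) ^ k : ℝ[X])).eval x := by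
    funext x
    simp only [Polynomial.eval_mul, Polynomial.eval_pow, Polynomial.eval_sub,
      Polynomial.eval_X, Polynomial.eval_C, ← mul_pow]
    ring
  have hder : derivative^[k] ((X - C 1) ^ k * (X - C (-1)) ^ k : ℝ[X])
      = ∑ j ∈ range (k + 1), k.choose j •
        ((k.descFactorial (k - j)) • (X - C 1) ^ (k - (k - j)) *
          (k.descFactorial j) • (X - C (-1)) ^ (k - j)) := by
    rw [Polynomial.iterate_derivative_mul]
    exact Finset.sum_congr rfl fun j _ => by
      rw [Polynomial.iterate_derivative_X_sub_pow, Polynomial.iterate_derivative_X_sub_pow]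
  rw [legendreP, hfun, iteratedDeriv_polyEval]
  simp only [hder, Polynomial.eval_finset_sum, Finset.mul_sum]
  refine Finset.sum_congr rfl fun j hj => ?_
  have hjk : j ≤ k := Nat.lt_succ_iff.mp (Finset.mem_range.mp hj)
  have h1 : k - (k - j) = j := by omega
  rw [h1]
  simp only [Polynomial.eval_smul, Polynomial.eval_mul, Polynomial.eval_pow,
    Polynomial.eval_sub, Polynomial.eval_X, Polynomial.eval_C, smul_eq_mul, nsmul_eq_mul]
  have key : (k.choose j * (k.descFactorial (k - j) * k.descFactorial j) : ℝ)
      = (k.choose j : ℝ) ^ 2 * k.factorial := by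
    exact_mod_cast congrArg (Nat.cast : ℕ → ℝ) (coeff_nat k j hjk)
  have h2 : ((t - 1) / 2) ^ j * ((t + 1) / 2) ^ (k - j)
      = (t - 1) ^ j * (t + 1) ^ (k - j) / 2 ^ k := by
    rw [div_pow, div_pow, div_mul_div_comm, ← pow_add]
    congr 2
    omega
  have hk2 : (2 : ℝ) ^ k ≠ 0 := by positivity
  have hkf : (k.factorial : ℝ) ≠ 0 := Nat.cast_ne_zero.mpr k.factorial_ne_zero
  have h3 : (2:ℝ)^j * 2^(k-j) = 2^k := by rw [← pow_add]; congr 1; omega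
  simp only [Polynomial.eval_natCast, sub_neg_eq_add]
  rw [mul_assoc ((k.choose j : ℝ) ^ 2), h2]
  field_simp
  linear_combination ((t-1)^j*(t+1)^(k-j)) * key

def cc (k i : ℕ) : ℕ := (k.choose i)^2 * (k-i).factorial

theorem cc_rec (k i : ℕ) : cc (k+1) (i+1) = cc k i + (k+2+i) * cc k (i+1) := by
  rcases lt_trichotomy i k with h | rfl | h
  · obtain ⟨d, rfl⟩ : ∃ d, k = i + 1 + d := ⟨k - i - 1, by omega⟩
    have e1 : i + 1 + d - i = d + 1 := by omega
    have e2 : i + 1 + d - (i+1) = d := by omega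
    have e3 : i + 1 + d + 1 - (i+1) = d + 1 := by omega
    unfold cc
    rw [e1, e2, e3, Nat.choose_succ_succ (i+1+d) i]
    have hr := Nat.choose_succ_right_eq (i+1+d) i
    rw [e1] at hr
    have hf : (d+1).factorial = (d+1) * d.factorial := Nat.factorial_succ d
    zify
    zify at hr
    rw [hf]
    push_cast
    linear_combination (-2*((i+1+d).choose (i+1) : ℤ) * d.factorial) * hr
  · simp [cc, Nat.choose_succ_self]
  · have h1 : (k+1).choose (i+1) = 0 := Nat.choose_eq_zero_of_lt (by omega)
    have h2 : k.choose i = 0 := Nat.choose_eq_zero_of_lt h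
    have h3 : k.choose (i+1) = 0 := Nat.choose_eq_zero_of_lt (by omega)
    simp [cc, h1, h2, h3]

theorem vdm (k : ℕ) (y : ℂ) :
    ∑ i ∈ range (k+1), (cc k i : ℂ) * ∏ t ∈ range i, (y - t)
      = ∏ t ∈ range k, (y + 1 + t) := by
  induction k with
  | zero => simp [cc]
  | succ k ih =>
    have hk1 : cc k (k+1) = 0 := by
      simp [cc, Nat.choose_eq_zero_of_lt]
    rw [Finset.sum_range_succ']
    have e1 : ∀ i ∈ range (k+1), (cc (k+1) (i+1) : ℂ) * ∏ t ∈ range (i+1), (y - t)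
        = (cc k i : ℂ) * ∏ t ∈ range (i+1), (y - t)
          + (((k+2+i) * cc k (i+1) : ℕ) : ℂ) * ∏ t ∈ range (i+1), (y - t) := by
      intro i _
      rw [cc_rec]; push_cast; ring
    rw [Finset.sum_congr rfl e1, Finset.sum_add_distrib]
    have e2 : ∑ i ∈ range (k+1), (((k+2+i) * cc k (i+1) : ℕ) : ℂ) * ∏ t ∈ range (i+1), (y - t)
        = ∑ i ∈ range k, (((k+1+(i+1)) * cc k (i+1) : ℕ) : ℂ) * ∏ t ∈ range (i+1), (y - t) := by
      rw [Finset.sum_range_succ]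
      simp only [hk1, Nat.mul_zero, Nat.cast_zero, zero_mul, add_zero]
      exact Finset.sum_congr rfl fun i _ => by rw [show k+2+i = k+1+(i+1) from by omega]
    rw [e2]
    have e3 := Finset.sum_range_succ'
      (fun i => (((k+1+i) * cc k i : ℕ) : ℂ) * ∏ t ∈ range i, (y - t)) k
    have e4 : ∑ i ∈ range k, (((k+1+(i+1)) * cc k (i+1) : ℕ) : ℂ) * ∏ t ∈ range (i+1), (y - t)
        = ∑ i ∈ range (k+1), (((k+1+i) * cc k i : ℕ) : ℂ) * ∏ t ∈ range i, (y - t)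
          - (((k+1) * cc k 0 : ℕ) : ℂ) := by
      rw [e3]; simp
    rw [e4]
    have e5 : (cc (k+1) 0 : ℂ) * ∏ t ∈ range 0, (y - t) = (((k+1) * cc k 0 : ℕ) : ℂ) := by
      simp [cc, Nat.factorial_succ]
    rw [e5]
    have e6 : ∀ i ∈ range (k+1),
        (cc k i : ℂ) * ∏ t ∈ range (i+1), (y - t)
          + (((k+1+i) * cc k i : ℕ) : ℂ) * ∏ t ∈ range i, (y - t)
        = (y + 1 + k) * ((cc k i : ℂ) * ∏ t ∈ range i, (y - t)) := by
      intro i _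
      rw [Finset.prod_range_succ]
      push_cast
      ring
    have e7 : ∑ i ∈ range (k+1), (cc k i : ℂ) * ∏ t ∈ range (i+1), (y - t)
          + (∑ i ∈ range (k+1), (((k+1+i) * cc k i : ℕ) : ℂ) * ∏ t ∈ range i, (y - t)
            - (((k+1) * cc k 0 : ℕ) : ℂ))
          + (((k+1) * cc k 0 : ℕ) : ℂ)
        = ∑ i ∈ range (k+1), ((cc k i : ℂ) * ∏ t ∈ range (i+1), (y - t)
            + (((k+1+i) * cc k i : ℕ) : ℂ) * ∏ t ∈ range i, (y - t)) := by
      rw [Finset.sum_add_distrib]; ring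
    rw [e7, Finset.sum_congr rfl e6, ← Finset.mul_sum, ih, Finset.prod_range_succ]
    push_cast
    ring



theorem Gamma_add_nat (w : ℂ) (hw : 0 < w.re) (n : ℕ) :
    Complex.Gamma (w + n) = (∏ m ∈ range n, (w + m)) * Complex.Gamma w := by
  induction n with
  | zero => simp
  | succ n ih =>
    have hne : w + n ≠ 0 := by
      intro h
      have : (w + n).re = 0 := by rw [h]; simp
      simp only [add_re, natCast_re] at this
      have : (0:ℝ) ≤ n := n.cast_nonneg
      linarith [hw]
    have : w + ((n:ℂ) + 1) = (w + n) + 1 := by ring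
    push_cast
    rw [this, Complex.Gamma_add_one _ hne, ih, Finset.prod_range_succ]
    ring

theorem beta_nat (w : ℂ) (hw : 0 < w.re) (n : ℕ) :
    Complex.betaIntegral w ((n : ℂ) + 1)
      = (n.factorial : ℂ) / ∏ m ∈ range (n + 1), (w + m) := by
  have h1 : 0 < ((n : ℂ) + 1).re := by
    simp only [add_re, natCast_re, one_re]
    positivity
  have key := Complex.Gamma_mul_Gamma_eq_betaIntegral hw h1
  rw [Complex.Gamma_nat_eq_factorial n] at key
  have h2 : w + ((n:ℂ) + 1) = w + ((n+1 : ℕ) : ℂ) := by push_cast; ring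
  rw [h2, Gamma_add_nat w hw (n+1)] at key
  have hG : Complex.Gamma w ≠ 0 := Complex.Gamma_ne_zero_of_re_pos hw
  have hP : (∏ m ∈ range (n + 1), (w + m)) ≠ 0 := by
    refine Finset.prod_ne_zero_iff.mpr fun m _ => ?_
    intro h
    have : (w + m).re = 0 := by rw [h]; simp
    simp only [add_re, natCast_re] at this
    have : (0:ℝ) ≤ m := m.cast_nonneg
    linarith [hw]
  rw [eq_comm, div_eq_iff hP]
  apply mul_left_cancel₀ hG
  rw [key]; ring


theorem term_funeq (s : ℂ) (hs : 0 < s.re) (a b : ℕ) :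
    (fun x : ℝ => (x:ℂ)^(s-1) * (x:ℂ)^a * (1 - (x:ℂ))^b)
      = fun x : ℝ => (x:ℂ)^((s + a) - 1) * (1 - (x:ℂ))^(((b:ℂ) + 1) - 1) := by
  funext x
  have hb : ((b:ℂ) + 1) - 1 = (b:ℂ) := by ring
  rw [hb, cpow_natCast]
  by_cases hx : (x:ℂ) = 0
  · rcases Nat.eq_zero_or_pos a with rfl | ha
    · simp
    · have h1 : (x:ℂ)^a = 0 := by rw [hx]; exact zero_pow (by omega)
      have h2 : (x:ℂ)^((s + a) - 1) = 0 := by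
        rw [hx, Complex.zero_cpow]
        intro h
        have : ((s + a) - 1).re = 0 := by rw [h]; simp
        simp only [sub_re, add_re, natCast_re, one_re] at this
        have : (1:ℝ) ≤ a := by exact_mod_cast ha
        linarith
      rw [h1, h2]; ring
  · rw [show (s + a) - 1 = (s - 1) + (a:ℂ) by ring, cpow_add _ _ hx, cpow_natCast]

theorem term_integrable (s : ℂ) (hs : 0 < s.re) (a b : ℕ) :
    IntervalIntegrable (fun x : ℝ => (x:ℂ)^(s-1) * (x:ℂ)^a * (1 - (x:ℂ))^b)
      MeasureTheory.volume 0 1 := by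
  rw [term_funeq s hs a b]
  exact Complex.betaIntegral_convergent (by simp; positivity) (by simp; positivity)

theorem term_integral (s : ℂ) (hs : 0 < s.re) (a b : ℕ) :
    (∫ x in (0:ℝ)..1, (x:ℂ)^(s-1) * (x:ℂ)^a * (1 - (x:ℂ))^b)
      = (b.factorial : ℂ) / ∏ m ∈ range (b + 1), (s + a + m) := by
  have h1 : 0 < (s + a).re := by
    simp only [add_re, natCast_re]
    positivity
  have h2 : (∫ x in (0:ℝ)..1, (x:ℂ)^(s-1) * (x:ℂ)^a * (1 - (x:ℂ))^b)
      = Complex.betaIntegral (s + a) ((b:ℂ) + 1) := by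
    rw [term_funeq s hs a b]; rfl
  rw [h2, beta_nat (s + a) h1 b]

theorem stmt7 (k : ℕ) (s : ℂ) (hs : 0 < s.re) :
    (∫ t in (-1 : ℝ)..1, ((1 - (t : ℂ)) / 2) ^ (s - 1) * (legendreP k t : ℂ))
      = (-1) ^ k * 2 * (∏ j ∈ Finset.Icc 1 k, (s - (j : ℂ))) /
          (∏ j ∈ Finset.range (k + 1), (s + (j : ℂ))) := by
  have nz : ∀ j : ℕ, s + (j:ℂ) ≠ 0 := by
    intro j h
    have h2 : (s + (j:ℂ)).re = 0 := by rw [h]; simp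
    simp only [add_re, natCast_re] at h2
    have : (0:ℝ) ≤ j := j.cast_nonneg
    linarith
  set F : ℝ → ℂ := fun t => ((1 - (t:ℂ))/2)^(s-1) * (legendreP k t : ℂ) with hF
  -- Step 1: substitution t = -2x+1
  have hsub := intervalIntegral.integral_comp_mul_add (a := (0:ℝ)) (b := 1)
    (c := (-2:ℝ)) F (by norm_num) 1
  rw [show (-2:ℝ) * 0 + 1 = 1 by norm_num, show (-2:ℝ) * 1 + 1 = -1 by norm_num,
    intervalIntegral.integral_symm (-1 : ℝ) 1] at hsub
  have hmain : (∫ t in (-1:ℝ)..1, F t) = 2 * ∫ x in (0:ℝ)..1, F (-2*x+1) := by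
    rw [hsub, Complex.real_smul]
    push_cast
    ring
  -- Step 2: pointwise expansion
  have hptw : ∀ x : ℝ, F (-2*x+1) = ∑ i ∈ range (k+1),
      ((k.choose i:ℂ)^2 * (-1)^i) * ((x:ℂ)^(s-1) * (x:ℂ)^i * (1-(x:ℂ))^(k-i)) := by
    intro x
    show ((1 - ((-2*x+1:ℝ):ℂ))/2)^(s-1) * ((legendreP k (-2*x+1) : ℝ) : ℂ) = _
    rw [legendre_eval]
    push_cast
    rw [show (1 - (-2*(x:ℂ)+1))/2 = (x:ℂ) by ring, Finset.mul_sum]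
    refine Finset.sum_congr rfl fun i _ => ?_
    rw [show ((-2*(x:ℂ)+1-1)/2) = -(x:ℂ) by ring,
      show ((-2*(x:ℂ)+1+1)/2) = 1-(x:ℂ) by ring, neg_pow]
    ring
  -- Step 3: integrate term by term
  have hint : (∫ x in (0:ℝ)..1, F (-2*x+1))
      = ∑ i ∈ range (k+1), ((k.choose i:ℂ)^2 * (-1)^i) *
          (((k-i).factorial : ℂ) / ∏ m ∈ range ((k-i) + 1), (s + i + m)) := by
    rw [intervalIntegral.integral_congr (g := fun x => ∑ i ∈ range (k+1),
      ((k.choose i:ℂ)^2 * (-1)^i) * ((x:ℂ)^(s-1) * (x:ℂ)^i * (1-(x:ℂ))^(k-i)))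
      (fun x _ => hptw x)]
    rw [intervalIntegral.integral_finset_sum
      (fun i _ => (term_integrable s hs i (k-i)).const_mul _)]
    refine Finset.sum_congr rfl fun i _ => ?_
    rw [intervalIntegral.integral_const_mul, term_integral s hs i (k-i)]
  -- Step 4: algebra
  set D := ∏ j ∈ range (k+1), (s + (j:ℂ)) with hDdef
  have hD : D ≠ 0 := Finset.prod_ne_zero_iff.mpr fun j _ => nz j
  have hterm : ∀ i ∈ range (k+1),
      ((k.choose i:ℂ)^2 * (-1)^i) *
          (((k-i).factorial : ℂ) / ∏ m ∈ range ((k-i) + 1), (s + i + m))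
        = ((cc k i : ℂ) * ∏ t ∈ range i, ((-s) - t)) / D := by
    intro i hi
    have hik : i ≤ k := Nat.lt_succ_iff.mp (Finset.mem_range.mp hi)
    have hsplit : D = (∏ j ∈ range i, (s + (j:ℂ))) *
        ∏ m ∈ range ((k-i) + 1), (s + i + m) := by
      rw [hDdef, show k+1 = i + ((k-i)+1) from by omega, Finset.prod_range_add]
      congr 1
      refine Finset.prod_congr rfl fun m _ => ?_
      push_cast; ring
    have hP1 : (∏ j ∈ range i, (s + (j:ℂ))) ≠ 0 :=
      Finset.prod_ne_zero_iff.mpr fun j _ => nz j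
    have hP2 : (∏ m ∈ range ((k-i) + 1), (s + i + m)) ≠ 0 := by
      refine Finset.prod_ne_zero_iff.mpr fun m _ => ?_
      have := nz (i + m)
      intro h
      apply this
      push_cast
      linear_combination h
    have hneg : ∏ t ∈ range i, ((-s) - (t:ℂ)) = (-1)^i * ∏ t ∈ range i, (s + t) := by
      rw [show (fun t : ℕ => (-s) - (t:ℂ)) = fun t : ℕ => (-1) * (s + t) from
        funext fun t => by ring]
      rw [Finset.prod_mul_distrib, Finset.prod_const, Finset.card_range]
    rw [hneg, hsplit]
    have hcc : (cc k i : ℂ) = (k.choose i:ℂ)^2 * ((k-i).factorial : ℂ) := by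
      rw [cc]; push_cast; ring
    rw [hcc]
    field_simp
  rw [hmain, hint, Finset.sum_congr rfl hterm, ← Finset.sum_div]
  have hvdm := vdm k (-s)
  rw [hvdm]
  -- relate products
  have hN : ∏ t ∈ range k, ((-s) + 1 + t) = (-1)^k * ∏ j ∈ Finset.Icc 1 k, (s - (j:ℂ)) := by
    have h1 : ∏ j ∈ Finset.Icc 1 k, (s - (j:ℂ)) = ∏ t ∈ range k, (s - ((1+t:ℕ):ℂ)) := by
      rw [← Finset.Ico_add_one_right_eq_Icc, Finset.prod_Ico_eq_prod_range, Nat.add_sub_cancel]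
    rw [h1, show (fun t : ℕ => (-s) + 1 + (t:ℂ)) = fun t : ℕ => (-1) * (s - ((1+t:ℕ):ℂ)) from
      funext fun t => by push_cast; ring]
    rw [Finset.prod_mul_distrib, Finset.prod_const, Finset.card_range]
  rw [hN]
  ring
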